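/- Let μ_σ and μ_ε be nonzero positive finite Borel measures on [0,1]. Then there exist C > 0 and r₀ ∈ (0,1] such that for all R with 0 < R ≤ r₀ and all θ ∈ [−π,π]: Φ_ε(R·e^{iθ}) ≠ 0 and |Φ_σ(R·e^{iθ})/Φ_ε(R·e^{iθ})| ≤ C/R. (In particular |√(Φ_σ(s)/Φ_ε(s))| ≲ |s|^{−1/2} and |s·√(Φ_σ(s)/Φ_ε(s))| → 0 as s → 0.) -/

import Mathlib

open MeasureTheory Complex Set

/-- `PhiP μ R θ = ∫₀¹ R^α e^{iαθ} dμ(α)` (polar form, including boundary values θ = ±π). -/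
noncomputable def PhiP (μ : Measure ℝ) (R θ : ℝ) : ℂ :=
  ∫ α in Set.Icc (0:ℝ) 1, ((R ^ α : ℝ) : ℂ) * Complex.exp ((α * θ : ℝ) * Complex.I) ∂μ

lemma cont_rpow_base {R : ℝ} (hR : 0 < R) : Continuous fun α : ℝ => R ^ α := by
  simp only [Real.rpow_def_of_pos hR]
  exact Real.continuous_exp.comp (continuous_const.mul continuous_id)

set_option maxHeartbeats 1600000 in
theorem stmt_12 (μσ με : Measure ℝ) [IsFiniteMeasure μσ] [IsFiniteMeasure με]
    (hσ : μσ ≠ 0) (hε : με ≠ 0)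
    (hσsupp : μσ (Set.Icc (0:ℝ) 1)ᶜ = 0) (hεsupp : με (Set.Icc (0:ℝ) 1)ᶜ = 0) :
    ∃ C > 0, ∃ r₀ : ℝ, 0 < r₀ ∧ r₀ ≤ 1 ∧
      ∀ R : ℝ, 0 < R → R ≤ r₀ → ∀ θ ∈ Set.Icc (-Real.pi) Real.pi,
        PhiP με R θ ≠ 0 ∧ ‖PhiP μσ R θ / PhiP με R θ‖ ≤ C / R := by
  have hIme : με (Set.Icc (0:ℝ) 1) ≠ 0 := by
    intro h
    apply hε
    rw [← Measure.measure_univ_eq_zero]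
    have h2 : με Set.univ ≤ με (Set.Icc (0:ℝ) 1) + με (Set.Icc (0:ℝ) 1)ᶜ := by
      simpa [Set.union_compl_self] using
        measure_union_le (μ := με) (Set.Icc (0:ℝ) 1) (Set.Icc (0:ℝ) 1)ᶜ
    simpa [h, hεsupp, le_zero_iff] using h2
  set S : Set ℝ := {t | t ∈ Set.Icc (0:ℝ) 1 ∧ με (Set.Icc 0 t) ≠ 0} with hSdef
  have hS1 : (1:ℝ) ∈ S := ⟨⟨zero_le_one, le_refl 1⟩, hIme⟩
  have hSne : S.Nonempty := ⟨1, hS1⟩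
  have hSbdd : BddBelow S := ⟨0, fun t ht => ht.1.1⟩
  set β := sInf S with hβdef
  have hβ0 : 0 ≤ β := le_csInf hSne fun t ht => ht.1.1
  have hβ1 : β ≤ 1 := csInf_le hSbdd hS1
  set δ := min (1/4 : ℝ) (1 - β) with hδdef
  have hδ0 : 0 ≤ δ := le_min (by norm_num) (by linarith)
  have hδ4 : δ ≤ 1/4 := min_le_left _ _
  have hβδ : β + δ ≤ 1 := by
    have := min_le_right (1/4:ℝ) (1-β); linarith
  -- measure below β is zero
  have hlow : ∀ t < β, με (Set.Icc 0 t) = 0 := by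
    intro t ht
    by_contra h
    have ht0 : 0 ≤ t := by
      by_contra h0
      push_neg at h0
      rw [Set.Icc_eq_empty (by linarith)] at h
      simp at h
    exact absurd (csInf_le hSbdd ⟨⟨ht0, ht.le.trans hβ1⟩, h⟩) (not_le.mpr ht)
  have hIio : με (Set.Iio β) = 0 := by
    have hsub : Set.Iio β ⊆ (Set.Icc (0:ℝ) 1)ᶜ ∪ ⋃ n : ℕ, Set.Icc (0:ℝ) (β - 1/(n+1)) := by
      intro x hx
      by_cases hx0 : 0 ≤ x
      · right
        obtain ⟨n, hn⟩ := exists_nat_one_div_lt (K := ℝ) (sub_pos.mpr hx)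
        exact Set.mem_iUnion.mpr ⟨n, ⟨hx0, by linarith⟩⟩
      · left; intro hmem; exact hx0 hmem.1
    refine measure_mono_null hsub ?_
    refine measure_union_null hεsupp (measure_iUnion_null fun n => ?_)
    refine hlow _ (sub_lt_self β ?_)
    positivity
  -- mass near β
  have hm : με (Set.Icc β (β+δ)) ≠ 0 := by
    have h2 : με (Set.Icc 0 (β+δ)) ≠ 0 := by
      rcases lt_or_eq_of_le hβ1 with hb | hb
      · have hδpos : 0 < δ := lt_min (by norm_num) (by linarith)
        obtain ⟨t, htS, htlt⟩ := (csInf_lt_iff hSbdd hSne).mp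
          (by linarith : sInf S < β + δ)
        exact fun h => htS.2 (measure_mono_null (Set.Icc_subset_Icc_right htlt.le) h)
      · have h1 : β + δ = 1 := by rw [hδdef, hb]; norm_num
        rw [h1]; exact hIme
    intro h
    apply h2
    have hsub : Set.Icc (0:ℝ) (β+δ) ⊆ Set.Iio β ∪ Set.Icc β (β+δ) := by
      intro x hx
      rcases lt_or_ge x β with h' | h'
      · exact Or.inl h'
      · exact Or.inr ⟨h', hx.2⟩
    exact measure_mono_null hsub (measure_union_null hIio h)
  set m' := (με (Set.Icc β (β+δ))).toReal with hm'def
  have hm' : 0 < m' := ENNReal.toReal_pos hm (measure_ne_top _ _)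
  set M := (με Set.univ).toReal with hMdef
  have hm'M : m' ≤ M :=
    ENNReal.toReal_mono (measure_ne_top _ _) (measure_mono (Set.subset_univ _))
  have hM : 0 < M := lt_of_lt_of_le hm' hm'M
  set Mσ := (μσ Set.univ).toReal with hMσdef
  have hMσ : 0 < Mσ := by
    refine ENNReal.toReal_pos ?_ (measure_ne_top _ _)
    simpa [Measure.measure_univ_eq_zero] using hσ
  clear_value β δ m' M Mσ S
  clear hlow hm hIme hS1 hSne hSbdd hβdef hδdef hSdef S hσ hε
  refine ⟨Mσ / (m'/4), by positivity, min 1 ((m'/(4*M))^(4:ℝ)),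
    lt_min one_pos (Real.rpow_pos_of_pos (by positivity) _), min_le_left _ _, ?_⟩
  intro R hR hRr θ hθ
  have hR1 : R ≤ 1 := hRr.trans (min_le_left _ _)
  have hθpi : |θ| ≤ Real.pi := abs_le.mpr ⟨hθ.1, hθ.2⟩
  have hR14 : R ^ ((1:ℝ)/4) ≤ m'/(4*M) := by
    have h1 : R ^ ((1:ℝ)/4) ≤ ((m'/(4*M))^(4:ℝ)) ^ ((1:ℝ)/4) :=
      Real.rpow_le_rpow hR.le (hRr.trans (min_le_right _ _)) (by norm_num)
    rwa [← Real.rpow_mul (by positivity), show (4:ℝ) * (1/4) = 1 by norm_num,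
      Real.rpow_one] at h1
  -- continuity / integrability
  have hcontf : Continuous fun α : ℝ =>
      ((R ^ α : ℝ) : ℂ) * Complex.exp ((α * θ : ℝ) * Complex.I) := by
    refine Continuous.mul (Complex.continuous_ofReal.comp (cont_rpow_base hR)) ?_
    exact Complex.continuous_exp.comp
      ((Complex.continuous_ofReal.comp (continuous_id.mul continuous_const)).mul
        continuous_const)
  have hcontg : Continuous fun α : ℝ => R ^ α * Real.cos ((α - β) * θ) :=
    (cont_rpow_base hR).mul
      (Real.continuous_cos.comp ((continuous_id.sub continuous_const).mul continuous_const))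
  have hfiε : IntegrableOn (fun α : ℝ =>
      ((R ^ α : ℝ) : ℂ) * Complex.exp ((α * θ : ℝ) * Complex.I)) (Set.Icc 0 1) με :=
    hcontf.continuousOn.integrableOn_compact isCompact_Icc
  have hfiσ : IntegrableOn (fun α : ℝ =>
      ((R ^ α : ℝ) : ℂ) * Complex.exp ((α * θ : ℝ) * Complex.I)) (Set.Icc 0 1) μσ :=
    hcontf.continuousOn.integrableOn_compact isCompact_Icc
  have hgi : IntegrableOn (fun α : ℝ => R ^ α * Real.cos ((α - β) * θ)) (Set.Icc 0 1) με :=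
    hcontg.continuousOn.integrableOn_compact isCompact_Icc
  -- rotation identity
  have hrot : ∀ α : ℝ,
      (Complex.exp (((-(β * θ) : ℝ) : ℂ) * Complex.I) *
        (((R ^ α : ℝ) : ℂ) * Complex.exp ((α * θ : ℝ) * Complex.I))).re
        = R ^ α * Real.cos ((α - β) * θ) := by
    intro α
    have h1 : Complex.exp (((-(β * θ) : ℝ) : ℂ) * Complex.I) *
        (((R ^ α : ℝ) : ℂ) * Complex.exp ((α * θ : ℝ) * Complex.I))
        = ((R ^ α : ℝ) : ℂ) * Complex.exp ((((α - β) * θ : ℝ) : ℂ) * Complex.I) := by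
      rw [mul_left_comm, ← Complex.exp_add]
      congr 2
      push_cast
      ring
    rw [h1, Complex.re_ofReal_mul, Complex.exp_ofReal_mul_I_re]
  -- real part of rotated integral
  have key : ∫ α in Set.Icc (0:ℝ) 1, (R ^ α * Real.cos ((α - β) * θ)) ∂με
      = (Complex.exp (((-(β * θ) : ℝ) : ℂ) * Complex.I) * PhiP με R θ).re := by
    have h2 := integral_re (μ := με.restrict (Set.Icc 0 1))
      (hfiε.const_mul (Complex.exp (((-(β * θ) : ℝ) : ℂ) * Complex.I)))
    simp only [RCLike.re_to_complex] at h2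
    rw [PhiP, ← integral_const_mul, ← h2]
    refine setIntegral_congr_fun measurableSet_Icc fun α _ => ?_
    exact (hrot α).symm
  -- split and bound
  have haeeq : Set.Icc (0:ℝ) 1 =ᵐ[με] Set.Icc β 1 := by
    rw [MeasureTheory.ae_eq_set]
    constructor
    · refine measure_mono_null (fun x hx => ?_) hIio
      rcases hx with ⟨hx1, hx2⟩
      by_contra h
      exact hx2 ⟨not_lt.mp h, hx1.2⟩
    · refine measure_mono_null (fun x hx => ?_) (measure_empty (μ := με))
      exact absurd ⟨hβ0.trans hx.1.1, hx.1.2⟩ hx.2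
  have hunion : Set.Icc β (β+δ) ∪ Set.Ioc (β+δ) 1 = Set.Icc β 1 :=
    Set.Icc_union_Ioc_eq_Icc (by linarith) hβδ
  have hdisj : Disjoint (Set.Icc β (β+δ)) (Set.Ioc (β+δ) 1) := by
    rw [Set.disjoint_left]
    rintro x ⟨_, hx2⟩ ⟨hx3, _⟩
    exact absurd hx2 (not_le.mpr hx3)
  have hsub1 : Set.Icc β (β+δ) ⊆ Set.Icc (0:ℝ) 1 :=
    Set.Icc_subset_Icc hβ0 hβδ
  have hsub2 : Set.Ioc (β+δ) 1 ⊆ Set.Icc (0:ℝ) 1 := fun x hx =>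
    ⟨by have := hx.1; linarith, hx.2⟩
  have hsplit : ∫ α in Set.Icc (0:ℝ) 1, (R ^ α * Real.cos ((α - β) * θ)) ∂με
      = (∫ α in Set.Icc β (β+δ), (R ^ α * Real.cos ((α - β) * θ)) ∂με)
        + ∫ α in Set.Ioc (β+δ) 1, (R ^ α * Real.cos ((α - β) * θ)) ∂με := by
    rw [setIntegral_congr_set haeeq, ← hunion]
    exact setIntegral_union hdisj measurableSet_Ioc (hgi.mono_set hsub1) (hgi.mono_set hsub2)
  have hRpos : ∀ x : ℝ, 0 < R ^ x := fun x => Real.rpow_pos_of_pos hR x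
  have hb1 : 1/2 * R ^ (β+δ) * m'
      ≤ ∫ α in Set.Icc β (β+δ), (R ^ α * Real.cos ((α - β) * θ)) ∂με := by
    have hpt : ∀ α ∈ Set.Icc β (β+δ), 1/2 * R ^ (β+δ) ≤ R ^ α * Real.cos ((α - β) * θ) := by
      intro α hα
      have h1 : R ^ (β+δ) ≤ R ^ α := Real.rpow_le_rpow_of_exponent_ge hR hR1 hα.2
      have hab : |α - β| = α - β := abs_of_nonneg (by linarith [hα.1])
      have hxb : |(α - β) * θ| ≤ Real.pi / 3 := by
        rw [abs_mul, hab]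
        have h2 : (α - β) * |θ| ≤ δ * Real.pi :=
          mul_le_mul (by linarith [hα.2]) hθpi (abs_nonneg θ) hδ0
        nlinarith [Real.pi_pos]
      have hcos : 1/2 ≤ Real.cos ((α - β) * θ) := by
        rw [← Real.cos_abs]
        calc (1:ℝ)/2 = Real.cos (Real.pi / 3) := Real.cos_pi_div_three.symm
          _ ≤ Real.cos |(α - β) * θ| :=
            Real.cos_le_cos_of_nonneg_of_le_pi (abs_nonneg _)
              (by linarith [Real.pi_pos]) hxb
      have h4 : R ^ (β+δ) * (1/2) ≤ R ^ α * Real.cos ((α - β) * θ) :=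
        mul_le_mul h1 hcos (by norm_num) (hRpos α).le
      linarith
    have hc := setIntegral_mono_on
      (f := fun _ : ℝ => 1/2 * R ^ (β+δ))
      (g := fun α : ℝ => R ^ α * Real.cos ((α - β) * θ))
      (integrableOn_const (measure_lt_top _ _).ne)
      (hgi.mono_set hsub1) measurableSet_Icc hpt
    rw [setIntegral_const] at hc
    calc 1/2 * R ^ (β+δ) * m'
        = (με (Set.Icc β (β+δ))).toReal • (1/2 * R ^ (β+δ)) := by
          rw [smul_eq_mul, ← hm'def]; ring
      _ ≤ _ := hc
  have hb2 : -(R ^ (β+1/2) * M)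
      ≤ ∫ α in Set.Ioc (β+δ) 1, (R ^ α * Real.cos ((α - β) * θ)) ∂με := by
    have hpt : ∀ α ∈ Set.Ioc (β+δ) 1, -(R ^ (β+1/2)) ≤ R ^ α * Real.cos ((α - β) * θ) := by
      intro α hα
      by_cases hc : α ≤ β + 1/2
      · have habs : |(α - β) * θ| ≤ Real.pi / 2 := by
          rw [abs_mul, _root_.abs_of_nonneg (by linarith [hα.1] : (0:ℝ) ≤ α - β)]
          have h2 : (α - β) * |θ| ≤ (1/2) * Real.pi :=
            mul_le_mul (by linarith) hθpi (abs_nonneg θ) (by norm_num)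
          linarith
        have hcos : 0 ≤ Real.cos ((α - β) * θ) := by
          refine Real.cos_nonneg_of_mem_Icc ⟨?_, ?_⟩
          · linarith [abs_le.mp habs |>.1]
          · linarith [abs_le.mp habs |>.2]
        have h4 := mul_nonneg (hRpos α).le hcos
        linarith [hRpos (β+1/2)]
      · have hra : R ^ α ≤ R ^ (β+1/2) :=
          Real.rpow_le_rpow_of_exponent_ge hR hR1 (le_of_not_ge hc)
        have hcm : -1 ≤ Real.cos ((α - β) * θ) := Real.neg_one_le_cos _
        have h4 := mul_le_mul_of_nonneg_left hcm (hRpos α).le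
        have h5 : R ^ α * (-1) = -(R ^ α) := by ring
        linarith
    have hc := setIntegral_mono_on
      (f := fun _ : ℝ => -(R ^ (β+1/2)))
      (g := fun α : ℝ => R ^ α * Real.cos ((α - β) * θ))
      (integrableOn_const (measure_lt_top _ _).ne)
      (hgi.mono_set hsub2) measurableSet_Ioc hpt
    rw [setIntegral_const] at hc
    refine le_trans ?_ hc
    rw [smul_eq_mul]
    have ht : (με (Set.Ioc (β+δ) 1)).toReal ≤ M := by
      rw [hMdef]
      exact ENNReal.toReal_mono (measure_ne_top _ _) (measure_mono (Set.subset_univ _))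
    have h0 : 0 ≤ (με (Set.Ioc (β+δ) 1)).toReal := ENNReal.toReal_nonneg
    rw [measureReal_def]; nlinarith [hRpos (β+1/2)]
  -- lower bound on |Φ_ε|
  have hlowΦ : 1/4 * m' * R ≤ ‖PhiP με R θ‖ := by
    have h1 : (Complex.exp (((-(β * θ) : ℝ) : ℂ) * Complex.I) * PhiP με R θ).re
        ≤ ‖Complex.exp (((-(β * θ) : ℝ) : ℂ) * Complex.I) * PhiP με R θ‖ :=
      Complex.re_le_norm _
    have h2 : ‖Complex.exp (((-(β * θ) : ℝ) : ℂ) * Complex.I) * PhiP με R θ‖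
        = ‖PhiP με R θ‖ := by
      rw [norm_mul, Complex.norm_exp_ofReal_mul_I, one_mul]
    have e2 : R ^ ((1:ℝ)/2-δ) ≤ R ^ ((1:ℝ)/4) :=
      Real.rpow_le_rpow_of_exponent_ge hR hR1 (by linarith)
    have e4 : R ≤ R ^ (β+δ) := by
      have := Real.rpow_le_rpow_of_exponent_ge hR hR1 hβδ
      rwa [Real.rpow_one] at this
    have hchain : 1/4 * m' * R ≤ 1/2 * R ^ (β+δ) * m' - R ^ (β+1/2) * M := by
      have hx2 : R ^ (β+1/2) * M ≤ R ^ (β+δ) * m' / 4 := by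
        have h6 : R ^ ((1:ℝ)/2-δ) ≤ m'/(4*M) := e2.trans hR14
        have h7 : R ^ (β+δ) * R ^ ((1:ℝ)/2-δ) ≤ R ^ (β+δ) * (m'/(4*M)) :=
          mul_le_mul_of_nonneg_left h6 (hRpos (β+δ)).le
        have h8 : R ^ (β+δ) * R ^ ((1:ℝ)/2-δ) * M ≤ R ^ (β+δ) * (m'/(4*M)) * M :=
          mul_le_mul_of_nonneg_right h7 hM.le
        have h9 : R ^ (β+δ) * (m'/(4*M)) * M = R ^ (β+δ) * m' / 4 := by
          field_simp
        have h10 : R ^ (β+1/2) = R ^ (β+δ) * R ^ ((1:ℝ)/2-δ) := by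
          rw [← Real.rpow_add hR]; congr 1; ring
        rw [h10]; linarith
      have hx3 : m' * R ≤ m' * R ^ (β+δ) := mul_le_mul_of_nonneg_left e4 hm'.le
      linarith
    calc 1/4 * m' * R ≤ 1/2 * R ^ (β+δ) * m' - R ^ (β+1/2) * M := hchain
      _ ≤ (Complex.exp (((-(β * θ) : ℝ) : ℂ) * Complex.I) * PhiP με R θ).re := by
          rw [← key, hsplit]; linarith
      _ ≤ ‖PhiP με R θ‖ := h2 ▸ h1
  have hne : PhiP με R θ ≠ 0 := by
    intro h
    rw [h] at hlowΦ
    simp only [norm_zero] at hlowΦ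
    have hpos : 0 < 1/4 * m' * R := by positivity
    linarith
  -- upper bound on |Φ_σ|
  have hup : ‖PhiP μσ R θ‖ ≤ Mσ := by
    have h1 : ‖PhiP μσ R θ‖ ≤ 1 * (μσ (Set.Icc (0:ℝ) 1)).toReal := by
      refine norm_setIntegral_le_of_norm_le_const (measure_lt_top _ _) ?_
      intro α hα
      rw [norm_mul, Complex.norm_real, Real.norm_eq_abs,
        Complex.norm_exp_ofReal_mul_I, mul_one, _root_.abs_of_nonneg (hRpos α).le]
      exact Real.rpow_le_one hR.le hR1 hα.1
    refine h1.trans ?_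
    rw [one_mul, hMσdef]
    exact ENNReal.toReal_mono (measure_ne_top _ _) (measure_mono (Set.subset_univ _))
  refine ⟨hne, ?_⟩
  rw [norm_div]
  have hd : ‖PhiP μσ R θ‖ / ‖PhiP με R θ‖
      ≤ Mσ / (1/4 * m' * R) :=
    div_le_div₀ hMσ.le hup (by positivity) hlowΦ
  refine hd.trans (le_of_eq ?_)
  field_simp
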